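/- Let P¹ and P⁰ be mutually absolutely continuous probability measures on ℝ^d with KL(P¹‖P⁰) + KL(P⁰‖P¹) ≤ ε for some ε ∈ [0,4). Then for every measurable scoring rule r, the AUC of r for distinguishing P¹ from P⁰ satisfies AUC_r ≤ ½ + √ε/2 − ε/8. -/

import Mathlib

set_option maxHeartbeats 800000


open MeasureTheory Real

noncomputable def klDiv {Ω : Type*} [MeasurableSpace Ω] (P Q : Measure Ω) : ℝ :=
  ∫ x, llr P Q x ∂P

noncomputable def auc {Ω : Type*} [MeasurableSpace Ω] (P1 P0 : Measure Ω) (r : Ω → ℝ) : ℝ :=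
  ((P1.prod P0) {p | r p.2 < r p.1}).toReal
    + (1 / 2) * ((P1.prod P0) {p | r p.1 = r p.2}).toReal

private lemma aux_log_ineq {x : ℝ} (hx : 0 < x) :
    2 * (x - 1) ^ 2 ≤ (x + 1) * ((x - 1) * Real.log x) := by
  have hderiv : ∀ y : ℝ, 0 < y → HasDerivAt (fun y : ℝ => (y + 1) * Real.log y - 2 * (y - 1))
      (1 * Real.log y + (y + 1) * y⁻¹ - 2 * 1) y := by
    intro y hy
    exact (((hasDerivAt_id y).add_const 1).mul (Real.hasDerivAt_log hy.ne')).sub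
      (((hasDerivAt_id y).sub_const 1).const_mul 2)
  have hmono : MonotoneOn (fun y : ℝ => (y + 1) * Real.log y - 2 * (y - 1)) (Set.Ioi 0) := by
    apply monotoneOn_of_deriv_nonneg (convex_Ioi 0)
    · apply ContinuousOn.sub
      · exact (continuous_id.add continuous_const).continuousOn.mul
          (Real.continuousOn_log.mono (fun y hy => ne_of_gt hy))
      · exact (continuous_const.mul (continuous_id.sub continuous_const)).continuousOn
    · intro y hy
      rw [interior_Ioi] at hy
      exact (hderiv y hy).differentiableAt.differentiableWithinAt
    · intro y hy
      rw [interior_Ioi] at hy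
      have hy0 : (0:ℝ) < y := hy
      rw [(hderiv y hy0).deriv]
      have hlog : Real.log y⁻¹ ≤ y⁻¹ - 1 := Real.log_le_sub_one_of_pos (inv_pos.mpr hy0)
      rw [Real.log_inv] at hlog
      have hyy : y * y⁻¹ = 1 := mul_inv_cancel₀ hy0.ne'
      nlinarith [hlog]
  have key : 0 ≤ (x - 1) * ((x + 1) * Real.log x - 2 * (x - 1)) := by
    rcases le_total 1 x with h | h
    · have h2 := hmono (Set.mem_Ioi.mpr one_pos) (Set.mem_Ioi.mpr hx) h
      simp only [Real.log_one] at h2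
      have h3 : (0:ℝ) ≤ (x + 1) * Real.log x - 2 * (x - 1) := by linarith
      exact mul_nonneg (by linarith) h3
    · have h2 := hmono (Set.mem_Ioi.mpr hx) (Set.mem_Ioi.mpr one_pos) h
      simp only [Real.log_one] at h2
      have h3 : (x + 1) * Real.log x - 2 * (x - 1) ≤ 0 := by linarith
      have h4 := mul_nonneg (neg_nonneg.mpr (by linarith : x - 1 ≤ 0)) (neg_nonneg.mpr h3)
      rwa [neg_mul_neg] at h4
  nlinarith [key]

private lemma aux_cs {α : Type*} [MeasurableSpace α] (μ : Measure α) (w u v : α → ℝ)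
    (hw : Integrable w μ) (hu : Integrable u μ) (hv : Integrable v μ)
    (hw0 : 0 ≤ᵐ[μ] w) (hu0 : 0 ≤ᵐ[μ] u) (hv0 : 0 ≤ᵐ[μ] v)
    (h : ∀ᵐ x ∂μ, w x ^ 2 ≤ u x * v x) :
    (∫ x, w x ∂μ) ^ 2 ≤ (∫ x, u x ∂μ) * (∫ x, v x ∂μ) := by
  have hW : ENNReal.ofReal (∫ x, w x ∂μ) = ∫⁻ x, ENNReal.ofReal (w x) ∂μ :=
    ofReal_integral_eq_lintegral_ofReal hw hw0
  have hU : ENNReal.ofReal (∫ x, u x ∂μ) = ∫⁻ x, ENNReal.ofReal (u x) ∂μ :=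
    ofReal_integral_eq_lintegral_ofReal hu hu0
  have hV : ENNReal.ofReal (∫ x, v x ∂μ) = ∫⁻ x, ENNReal.ofReal (v x) ∂μ :=
    ofReal_integral_eq_lintegral_ofReal hv hv0
  have hpq : (2:ℝ).HolderConjugate 2 := ⟨by norm_num, by norm_num, by norm_num⟩
  set F := fun x => ENNReal.ofReal (Real.sqrt (u x)) with hF
  set G := fun x => ENNReal.ofReal (Real.sqrt (v x)) with hG
  have hFm : AEMeasurable F μ :=
    (Real.continuous_sqrt.measurable.comp_aemeasurable hu.aemeasurable).ennreal_ofReal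
  have hGm : AEMeasurable G μ :=
    (Real.continuous_sqrt.measurable.comp_aemeasurable hv.aemeasurable).ennreal_ofReal
  have hpt : ∀ᵐ x ∂μ, ENNReal.ofReal (w x) ≤ (F * G) x := by
    filter_upwards [h, hw0, hu0, hv0] with x hx hwx hux hvx
    have h1 : w x ≤ Real.sqrt (u x) * Real.sqrt (v x) := by
      rw [← Real.sqrt_mul hux]
      exact (Real.le_sqrt hwx (mul_nonneg hux hvx)).mpr hx
    calc ENNReal.ofReal (w x) ≤ ENNReal.ofReal (Real.sqrt (u x) * Real.sqrt (v x)) :=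
          ENNReal.ofReal_le_ofReal h1
      _ = (F * G) x := by
          simp [hF, hG, ENNReal.ofReal_mul (Real.sqrt_nonneg _)]
  have hF2 : ∫⁻ x, F x ^ (2:ℝ) ∂μ = ∫⁻ x, ENNReal.ofReal (u x) ∂μ := by
    refine lintegral_congr_ae ?_
    filter_upwards [hu0] with x hux
    rw [hF, ENNReal.ofReal_rpow_of_nonneg (Real.sqrt_nonneg _) (by norm_num)]
    congr 1
    rw [show ((2:ℝ)) = ((2:ℕ):ℝ) by norm_num, Real.rpow_natCast, sq, Real.mul_self_sqrt hux]
  have hG2 : ∫⁻ x, G x ^ (2:ℝ) ∂μ = ∫⁻ x, ENNReal.ofReal (v x) ∂μ := by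
    refine lintegral_congr_ae ?_
    filter_upwards [hv0] with x hvx
    rw [hG, ENNReal.ofReal_rpow_of_nonneg (Real.sqrt_nonneg _) (by norm_num)]
    congr 1
    rw [show ((2:ℝ)) = ((2:ℕ):ℝ) by norm_num, Real.rpow_natCast, sq, Real.mul_self_sqrt hvx]
  have hmain : ENNReal.ofReal (∫ x, w x ∂μ)
      ≤ ENNReal.ofReal (Real.sqrt (∫ x, u x ∂μ) * Real.sqrt (∫ x, v x ∂μ)) := by
    calc ENNReal.ofReal (∫ x, w x ∂μ) = ∫⁻ x, ENNReal.ofReal (w x) ∂μ := hW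
      _ ≤ ∫⁻ x, (F * G) x ∂μ := lintegral_mono_ae hpt
      _ ≤ (∫⁻ x, F x ^ (2:ℝ) ∂μ) ^ (1/(2:ℝ)) * (∫⁻ x, G x ^ (2:ℝ) ∂μ) ^ (1/(2:ℝ)) :=
          ENNReal.lintegral_mul_le_Lp_mul_Lq μ hpq hFm hGm
      _ = (ENNReal.ofReal (∫ x, u x ∂μ)) ^ (1/(2:ℝ)) * (ENNReal.ofReal (∫ x, v x ∂μ)) ^ (1/(2:ℝ)) := by
          rw [hF2, hG2, ← hU, ← hV]
      _ = ENNReal.ofReal (Real.sqrt (∫ x, u x ∂μ) * Real.sqrt (∫ x, v x ∂μ)) := by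
          rw [ENNReal.ofReal_rpow_of_nonneg (integral_nonneg_of_ae hu0) (by norm_num),
            ENNReal.ofReal_rpow_of_nonneg (integral_nonneg_of_ae hv0) (by norm_num),
            ← ENNReal.ofReal_mul (Real.rpow_nonneg (integral_nonneg_of_ae hu0) _),
            ← Real.sqrt_eq_rpow, ← Real.sqrt_eq_rpow]
  have hfin : ∫ x, w x ∂μ ≤ Real.sqrt (∫ x, u x ∂μ) * Real.sqrt (∫ x, v x ∂μ) :=
    (ENNReal.ofReal_le_ofReal_iff (by positivity)).mp hmain
  have hw' : 0 ≤ ∫ x, w x ∂μ := integral_nonneg_of_ae hw0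
  nlinarith [Real.sq_sqrt (integral_nonneg_of_ae hu0), Real.sq_sqrt (integral_nonneg_of_ae hv0),
    Real.sqrt_nonneg (∫ x, u x ∂μ), Real.sqrt_nonneg (∫ x, v x ∂μ)]

private lemma aux_partition {α : Type*} [MeasurableSpace α] (m : Measure α) {u v : α → ℝ}
    (hu : Measurable u) (hv : Measurable v) :
    m {p | u p < v p} + m {p | v p < u p} + m {p | u p = v p} = m Set.univ := by
  have hB : MeasurableSet {p | v p < u p} := measurableSet_lt hv hu
  have hC : MeasurableSet {p | u p = v p} := measurableSet_eq_fun hu hv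
  have dAB : Disjoint {p | u p < v p} {p | v p < u p} := by
    rw [Set.disjoint_left]
    intro p hp hp2
    simp only [Set.mem_setOf_eq] at hp hp2
    exact lt_asymm hp2 hp
  have dC : Disjoint ({p | u p < v p} ∪ {p | v p < u p}) {p | u p = v p} := by
    rw [Set.disjoint_left]
    rintro p (hp | hp) hpC
    · exact (ne_of_lt hp) hpC
    · exact (ne_of_gt hp) hpC
  have hcover : ({p | u p < v p} ∪ {p | v p < u p}) ∪ {p | u p = v p} = Set.univ := by
    ext p
    simp only [Set.mem_union, Set.mem_setOf_eq, Set.mem_univ, iff_true]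
    rcases lt_trichotomy (u p) (v p) with h | h | h
    · exact Or.inl (Or.inl h)
    · exact Or.inr h
    · exact Or.inl (Or.inr h)
  rw [← hcover, measure_union dC hC, measure_union dAB hB]

theorem auc_le_of_symmetrized_kl {d : ℕ}
    (P1 P0 : Measure (Fin d → ℝ)) [IsProbabilityMeasure P1] [IsProbabilityMeasure P0]
    (h10 : P1 ≪ P0) (h01 : P0 ≪ P1)
    (hInt10 : Integrable (llr P1 P0) P1) (hInt01 : Integrable (llr P0 P1) P0)
    (ε : ℝ) (hε0 : 0 ≤ ε) (hε4 : ε < 4)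
    (hKL : klDiv P1 P0 + klDiv P0 P1 ≤ ε)
    (r : (Fin d → ℝ) → ℝ) (hr : Measurable r) :
    auc P1 P0 r ≤ 1 / 2 + Real.sqrt ε / 2 - ε / 8 := by
  haveI : P1.HaveLebesgueDecomposition P0 := Measure.haveLebesgueDecomposition_of_sigmaFinite P1 P0
  set g := fun x => (P1.rnDeriv P0 x).toReal with hgdef
  have hgint : Integrable g P0 := Measure.integrable_toReal_rnDeriv
  have hint1 : ∫ x, g x ∂P0 = 1 := by
    rw [hgdef, Measure.integral_toReal_rnDeriv h10, probReal_univ]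
  have hgpos : ∀ᵐ x ∂P0, 0 < g x := by
    filter_upwards [Measure.rnDeriv_pos' h01, Measure.rnDeriv_lt_top P1 P0] with x h1 h2
    exact ENNReal.toReal_pos h1.ne' h2.ne
  have hKL1 : klDiv P1 P0 = ∫ x, g x * Real.log (g x) ∂P0 := by
    rw [klDiv, ← MeasureTheory.integral_rnDeriv_smul h10]
    rfl
  have hIgg : Integrable (fun x => g x * Real.log (g x)) P0 :=
    (MeasureTheory.integrable_rnDeriv_smul_iff h10).mpr hInt10
  have hKL0 : klDiv P0 P1 = ∫ x, -Real.log (g x) ∂P0 := by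
    rw [klDiv]
    refine integral_congr_ae ?_
    filter_upwards [neg_llr h01] with x hx
    simp only [Pi.neg_apply] at hx
    have h1 : llr P0 P1 x = - llr P1 P0 x := by linarith
    rw [h1]
    rfl
  have hIlog : Integrable (fun x => Real.log (g x)) P0 := by
    have h1 : Integrable (fun x => -Real.log (g x)) P0 := by
      refine hInt01.congr ?_
      filter_upwards [neg_llr h01] with x hx
      simp only [Pi.neg_apply] at hx
      rw [show Real.log (g x) = llr P1 P0 x from rfl]
      linarith
    have h2 : (fun x => Real.log (g x)) = fun x => -(-Real.log (g x)) := by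
      funext x; ring
    rw [h2]; exact h1.neg
  have hIu : Integrable (fun x => (g x - 1) * Real.log (g x)) P0 := by
    have heq : (fun x => (g x - 1) * Real.log (g x))
        = fun x => g x * Real.log (g x) - Real.log (g x) := by funext x; ring
    rw [heq]; exact hIgg.sub hIlog
  have hsum : ∫ x, (g x - 1) * Real.log (g x) ∂P0 ≤ ε := by
    have heq : (fun x => (g x - 1) * Real.log (g x))
        = fun x => g x * Real.log (g x) + -Real.log (g x) := by funext x; ring
    have hnegint : Integrable (fun x => -Real.log (g x)) P0 := hIlog.neg
    rw [heq, integral_add hIgg hnegint, ← hKL1, ← hKL0]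
    exact hKL
  set T := ∫ x, |g x - 1| ∂P0 with hTdef
  have hTint : Integrable (fun x => |g x - 1|) P0 := (hgint.sub (integrable_const 1)).abs
  have hvint : Integrable (fun x => (g x + 1)/2) P0 :=
    (hgint.add (integrable_const 1)).div_const 2
  have hvval : ∫ x, (g x + 1)/2 ∂P0 = 1 := by
    rw [integral_div, integral_add hgint (integrable_const 1), hint1]
    simp
  have hu0 : 0 ≤ᵐ[P0] fun x => (g x - 1) * Real.log (g x) := by
    filter_upwards [hgpos] with x hx
    rcases le_total 1 (g x) with h | h
    · exact mul_nonneg (by linarith) (Real.log_nonneg h)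
    · have h2 : Real.log (g x) ≤ 0 := Real.log_nonpos hx.le h
      have h4 := mul_nonneg (neg_nonneg.mpr (by linarith : g x - 1 ≤ 0)) (neg_nonneg.mpr h2)
      rwa [neg_mul_neg] at h4
  have hTsq : T ^ 2 ≤ ε := by
    have hcs := aux_cs P0 (fun x => |g x - 1|) (fun x => (g x - 1) * Real.log (g x))
      (fun x => (g x + 1)/2) hTint hIu hvint
      (ae_of_all _ fun x => abs_nonneg _) hu0
      (by filter_upwards [hgpos] with x hx; exact (by linarith : (0:ℝ) ≤ (g x + 1)/2))
      (by filter_upwards [hgpos] with x hx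
          rw [sq_abs]
          nlinarith [aux_log_ineq hx])
    rw [hvval, mul_one] at hcs
    exact le_trans hcs hsum
  have hT0 : 0 ≤ T := integral_nonneg fun x => abs_nonneg _
  have hTs : T ≤ Real.sqrt ε := by
    calc T = Real.sqrt (T^2) := (Real.sqrt_sq hT0).symm
    _ ≤ Real.sqrt ε := Real.sqrt_le_sqrt hTsq
  -- overlap measure
  set ν := P0.withDensity (fun x => min (P1.rnDeriv P0 x) 1) with hν
  have hνP0 : ν ≤ P0 := by
    have h1 := withDensity_mono (μ := P0)
      (ae_of_all _ fun x => min_le_right (P1.rnDeriv P0 x) 1)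
    rwa [show (fun _ : Fin d → ℝ => (1:ENNReal)) = (1 : (Fin d → ℝ) → ENNReal) from rfl,
      withDensity_one] at h1
  have hνP1 : ν ≤ P1 := by
    conv_rhs => rw [← Measure.withDensity_rnDeriv_eq P1 P0 h10]
    exact withDensity_mono (ae_of_all _ fun x => min_le_left _ _)
  haveI : IsFiniteMeasure ν :=
    ⟨lt_of_le_of_lt (Measure.le_iff'.mp hνP0 _) (measure_lt_top _ _)⟩
  have hcval : (ν Set.univ).toReal = 1 - T/2 := by
    have h1 : ν Set.univ = ∫⁻ x, min (P1.rnDeriv P0 x) 1 ∂P0 := by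
      rw [hν, withDensity_apply _ MeasurableSet.univ, Measure.restrict_univ]
    have h2 : (∫⁻ x, min (P1.rnDeriv P0 x) 1 ∂P0).toReal = ∫ x, min (g x) 1 ∂P0 := by
      rw [← integral_toReal
        (((Measure.measurable_rnDeriv P1 P0).min measurable_const).aemeasurable)
        (ae_of_all _ fun x => lt_of_le_of_lt (min_le_right _ _) ENNReal.one_lt_top)]
      refine integral_congr_ae ?_
      filter_upwards [Measure.rnDeriv_lt_top P1 P0] with x hx
      rw [ENNReal.toReal_min hx.ne ENNReal.one_ne_top, ENNReal.toReal_one]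
    have h3 : ∫ x, min (g x) 1 ∂P0 = 1 - T/2 := by
      have hptw : (fun x => min (g x) 1) = fun x => (g x + 1 - |g x - 1|)/2 := by
        funext x
        rcases le_total (g x) 1 with h | h
        · rw [min_eq_left h, abs_of_nonpos (by linarith)]; ring
        · rw [min_eq_right h, abs_of_nonneg (by linarith)]; ring
      have hadd : Integrable (fun x => g x + 1) P0 := hgint.add (integrable_const 1)
      rw [hptw, integral_div, integral_sub hadd hTint,
        integral_add hgint (integrable_const 1), hint1]
      simp only [integral_const, probReal_univ, smul_eq_mul, one_mul]
      rw [← hTdef]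
      ring
    rw [h1, h2, h3]
  -- sets
  have hru : Measurable fun p : (Fin d → ℝ) × (Fin d → ℝ) => r p.1 := hr.comp measurable_fst
  have hrv : Measurable fun p : (Fin d → ℝ) × (Fin d → ℝ) => r p.2 := hr.comp measurable_snd
  have hprodmono : ∀ s : Set ((Fin d → ℝ) × (Fin d → ℝ)), MeasurableSet s →
      (ν.prod ν) s ≤ (P1.prod P0) s := by
    intro s hs
    rw [Measure.prod_apply hs, Measure.prod_apply hs]
    calc ∫⁻ x, ν (Prod.mk x ⁻¹' s) ∂ν ≤ ∫⁻ x, P0 (Prod.mk x ⁻¹' s) ∂ν :=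
          lintegral_mono fun x => Measure.le_iff'.mp hνP0 _
      _ ≤ ∫⁻ x, P0 (Prod.mk x ⁻¹' s) ∂P1 := lintegral_mono' hνP1 le_rfl
  have hpart1 : (P1.prod P0) {p | r p.1 < r p.2} + (P1.prod P0) {p | r p.2 < r p.1}
      + (P1.prod P0) {p | r p.1 = r p.2} = (P1.prod P0) Set.univ :=
    aux_partition (P1.prod P0) hru hrv
  have hpart2 : (ν.prod ν) {p | r p.1 < r p.2} + (ν.prod ν) {p | r p.2 < r p.1}
      + (ν.prod ν) {p | r p.1 = r p.2} = (ν.prod ν) Set.univ :=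
    aux_partition (ν.prod ν) hru hrv
  have hswap : (ν.prod ν) {p | r p.2 < r p.1} = (ν.prod ν) {p | r p.1 < r p.2} := by
    conv_lhs => rw [← Measure.prod_swap]
    rw [Measure.map_apply measurable_swap (measurableSet_lt hrv hru)]
    congr 1
  have h1 : ((P1.prod P0) {p | r p.1 < r p.2}).toReal
      + ((P1.prod P0) {p | r p.2 < r p.1}).toReal
      + ((P1.prod P0) {p | r p.1 = r p.2}).toReal = 1 := by
    rw [← ENNReal.toReal_add (measure_ne_top _ _) (measure_ne_top _ _),
      ← ENNReal.toReal_add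
        (ENNReal.add_ne_top.mpr ⟨measure_ne_top _ _, measure_ne_top _ _⟩) (measure_ne_top _ _),
      hpart1, measure_univ, ENNReal.toReal_one]
  have h2 : ((ν.prod ν) {p | r p.1 < r p.2}).toReal
      + ((ν.prod ν) {p | r p.2 < r p.1}).toReal
      + ((ν.prod ν) {p | r p.1 = r p.2}).toReal = ((ν Set.univ).toReal)^2 := by
    rw [← ENNReal.toReal_add (measure_ne_top _ _) (measure_ne_top _ _),
      ← ENNReal.toReal_add
        (ENNReal.add_ne_top.mpr ⟨measure_ne_top _ _, measure_ne_top _ _⟩) (measure_ne_top _ _),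
      hpart2]
    have huniv : (ν.prod ν) Set.univ = ν Set.univ * ν Set.univ := by
      rw [← Set.univ_prod_univ, Measure.prod_prod]
    rw [huniv, ENNReal.toReal_mul, sq]
  have h2' : ((ν.prod ν) {p | r p.2 < r p.1}).toReal
      = ((ν.prod ν) {p | r p.1 < r p.2}).toReal := by rw [hswap]
  have hgeA : ((ν.prod ν) {p | r p.1 < r p.2}).toReal
      ≤ ((P1.prod P0) {p | r p.1 < r p.2}).toReal :=
    ENNReal.toReal_mono (measure_ne_top _ _) (hprodmono _ (measurableSet_lt hru hrv))
  have hgeC : ((ν.prod ν) {p | r p.1 = r p.2}).toReal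
      ≤ ((P1.prod P0) {p | r p.1 = r p.2}).toReal :=
    ENNReal.toReal_mono (measure_ne_top _ _) (hprodmono _ (measurableSet_eq_fun hru hrv))
  have hauc : auc P1 P0 r = ((P1.prod P0) {p | r p.2 < r p.1}).toReal
      + (1/2) * ((P1.prod P0) {p | r p.1 = r p.2}).toReal := rfl
  have key1 : auc P1 P0 r ≤ 1 - ((ν Set.univ).toReal)^2/2 := by
    rw [hauc]
    linarith [h1, h2, h2', hgeA, hgeC]
  have hs2 : Real.sqrt ε ^ 2 = ε := Real.sq_sqrt hε0
  have hs0 : 0 ≤ Real.sqrt ε := Real.sqrt_nonneg ε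
  have hslt : Real.sqrt ε < 2 := by nlinarith
  have key2 : 1 - ((ν Set.univ).toReal)^2/2 ≤ 1/2 + Real.sqrt ε/2 - ε/8 := by
    rw [hcval]
    have hprodpos : 0 ≤ (Real.sqrt ε - T) * (4 - (Real.sqrt ε + T)) :=
      mul_nonneg (by linarith) (by linarith)
    nlinarith [hprodpos, hs2]
  linarith [key1, key2]
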